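/- Let f : [B]² → ℕ with |B| = ℵ_{m+1}, and let J_1, …, J_n be identities each realized by every coloring of a set of size ℵ_m. Then there exist pairwise disjoint finite sets A_1, …, A_n ⊆ B, with every element of A_i less than every element of A_j for i < j, such that f realizes J_i on A_i, and colors c_1, …, c_n < ω such that f({a,b}) = c_i whenever a ∈ A_i and b ∈ A_j with i < j. -/

import Mathlib

/-- `f` realizes, within the set `S`, the identity represented by the coloring `g` with
finite field `G`: there is an injection `k` of `G` into `S` such that differently
`f`-colored image pairs come from differently `g`-colored pairs. -/
def RealizesWithin {β : Type*} (f : Sym2 β → ℕ) (G : Finset ℕ) (g : Sym2 ℕ → ℕ)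
    (S : Set β) : Prop :=
  ∃ k : ℕ → β, Set.InjOn k G ∧ (∀ x ∈ G, k x ∈ S) ∧
    ∀ x y u v : ℕ, x ∈ G → y ∈ G → u ∈ G → v ∈ G → x ≠ y → u ≠ v →
      f s(k x, k y) ≠ f s(k u, k v) → g s(x, y) ≠ g s(u, v)

/-- `f` realizes the identity represented by the coloring `g` with finite field `G`. -/
def RealizesId {β : Type*} (f : Sym2 β → ℕ) (G : Finset ℕ) (g : Sym2 ℕ → ℕ) : Prop :=
  RealizesWithin f G g Set.univ

/-- A type of cardinality `ℵ_m`. -/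
def alephT (m : ℕ) : Type := ((Cardinal.aleph m).ord).ToType

open Cardinal Set Ordinal

universe u

lemma my_isRegular_aleph_nat (m : ℕ) (hm : 1 ≤ m) : (Cardinal.aleph.{u} m).IsRegular := by
  obtain ⟨k, rfl⟩ : ∃ k, m = k + 1 := ⟨m - 1, (Nat.succ_pred_eq_of_pos hm).symm⟩
  have : ((k + 1 : ℕ) : Ordinal) = Order.succ (k : Ordinal) := by
    push_cast
    rw [Ordinal.add_one_eq_succ]
  rw [this]
  exact Cardinal.isRegular_aleph_succ _

lemma my_aleph0_lt_aleph_nat (m : ℕ) (hm : 1 ≤ m) : ℵ₀ < Cardinal.aleph.{u} m := by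
  rw [← Cardinal.aleph_zero]
  rw [Cardinal.aleph_lt_aleph]
  exact_mod_cast hm

lemma my_big_fiber {α β : Type u} (F : α → β) {c : Cardinal.{u}} (hc : c.IsRegular)
    (hα : c ≤ #α) (hβ : #β < c) : ∃ v, c ≤ #{a | F a = v} := by
  by_contra h
  push_neg at h
  have h1 : (Set.univ : Set α) = ⋃ v, F ⁻¹' {v} := by
    ext a; simp
  have h2 : #α ≤ Cardinal.sum fun v => #(F ⁻¹' {v} : Set α) := by
    calc #α = #(Set.univ : Set α) := Cardinal.mk_univ.symm
    _ = #(⋃ v, F ⁻¹' {v} : Set α) := by rw [h1]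
    _ ≤ _ := Cardinal.mk_iUnion_le_sum_mk
  have h3 : Cardinal.sum (fun v => #(F ⁻¹' {v} : Set α)) < c := by
    apply Cardinal.sum_lt_of_isRegular hc hβ
    intro v
    exact h v
  exact absurd (hα.trans h2) (not_le.mpr h3)

lemma my_equiv_alephT (m : ℕ) {X : Type (u + 1)} (hX : #X = Cardinal.aleph.{u + 1} m) :
    Nonempty (alephT m ≃ X) := by
  rw [← Cardinal.lift_mk_eq'.{0, u + 1}]
  have h1 : #(alephT m) = Cardinal.aleph.{0} m := by
    show #((Cardinal.aleph.{0} m).ord).ToType = _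
    rw [Cardinal.mk_toType, Cardinal.card_ord]
  rw [h1, hX, Cardinal.lift_aleph]
  simp [Ordinal.lift_natCast]

lemma my_split (m : ℕ) (T : Set Ordinal.{u}) (hT : Cardinal.aleph.{u + 1} (m + 1) ≤ #T) :
    ∃ P R : Set Ordinal.{u}, P ⊆ T ∧ R ⊆ T ∧ (∀ a ∈ P, ∀ b ∈ R, a < b) ∧
      Cardinal.mk P = Cardinal.aleph.{u + 1} m ∧ Cardinal.aleph.{u + 1} (m + 1) ≤ #R := by
  classical
  set r := Subrel ((· < ·) : Ordinal → Ordinal → Prop) T with hr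
  haveI : IsWellOrder (Subtype T) r := by
    rw [hr]; exact (inferInstance : IsWellOrder T (Subrel ((· < ·) : Ordinal → Ordinal → Prop) (· ∈ T)))
  set μ := (Cardinal.aleph.{u + 1} m).ord with hμ
  have hμtype : μ ≤ Ordinal.type r := by
    rw [hμ, Cardinal.ord_le, Ordinal.card_type]
    exact (Cardinal.aleph_le_aleph.mpr (by exact_mod_cast Nat.le_succ m)).trans hT
  set P : Set Ordinal := {a | ∃ h : a ∈ T, Ordinal.typein r ⟨a, h⟩ < μ} with hPdef
  set R : Set Ordinal := {b | ∃ h : b ∈ T, μ ≤ Ordinal.typein r ⟨b, h⟩} with hRdef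
  have hPsub : P ⊆ T := by rintro a ⟨h, _⟩; exact h
  have hRsub : R ⊆ T := by rintro b ⟨h, _⟩; exact h
  have hPR : ∀ a ∈ P, ∀ b ∈ R, a < b := by
    rintro a ⟨ha, hlt⟩ b ⟨hb, hge⟩
    have h5 : Ordinal.typein r ⟨a, ha⟩ < Ordinal.typein r ⟨b, hb⟩ := lt_of_lt_of_le hlt hge
    rw [Ordinal.typein_lt_typein] at h5
    exact h5
  have hPcard : #P = Cardinal.aleph.{u + 1} m := by
    apply le_antisymm
    · have hch : ∀ p : P, ∃ h : (p : Ordinal) ∈ T, Ordinal.typein r ⟨p, h⟩ < μ := fun p => p.2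
      let F : P → μ.ToType := fun p =>
        Ordinal.ToType.mk (o := μ) ⟨Ordinal.typein r ⟨(p : Ordinal), (hch p).choose⟩,
          (hch p).choose_spec⟩
      have hF : Function.Injective F := by
        intro p q hpq
        have h1 := (Ordinal.ToType.mk (o := μ)).injective hpq
        have h2 : Ordinal.typein r ⟨(p : Ordinal), (hch p).choose⟩
            = Ordinal.typein r ⟨(q : Ordinal), (hch q).choose⟩ := congrArg Subtype.val h1
        have h3 := Ordinal.typein_injective r h2
        have h4 : (p : Ordinal) = (q : Ordinal) := congrArg (Subtype.val : T → Ordinal) h3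
        exact Subtype.ext h4
      calc #P ≤ #μ.ToType := Cardinal.mk_le_of_injective hF
      _ = Cardinal.aleph.{u + 1} m := by rw [Cardinal.mk_toType, hμ, Cardinal.card_ord]
    · have hsurj : ∀ t : μ.ToType, ∃ x : T, Ordinal.typein r x
          = ((Ordinal.ToType.mk (o := μ)).symm t : Ordinal) := by
        intro t
        have hlt : ((Ordinal.ToType.mk (o := μ)).symm t : Ordinal) < Ordinal.type r :=
          lt_of_lt_of_le ((Ordinal.ToType.mk (o := μ)).symm t).2 hμtype
        obtain ⟨x, hx⟩ := Ordinal.typein_surj r hlt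
        exact ⟨x, hx⟩
      let F : μ.ToType → P := fun t =>
        ⟨((hsurj t).choose : Ordinal), (hsurj t).choose.2, by
          rw [show (⟨((hsurj t).choose : Ordinal), (hsurj t).choose.2⟩ : T) = (hsurj t).choose
              from Subtype.ext rfl, (hsurj t).choose_spec]
          exact ((Ordinal.ToType.mk (o := μ)).symm t).2⟩
      have hF : Function.Injective F := by
        intro t s hts
        have h1 : ((hsurj t).choose : Ordinal) = ((hsurj s).choose : Ordinal) := by
          have := congrArg Subtype.val hts
          exact this
        have h2 : (hsurj t).choose = (hsurj s).choose := Subtype.ext h1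
        have h3 : ((Ordinal.ToType.mk (o := μ)).symm t : Ordinal)
            = ((Ordinal.ToType.mk (o := μ)).symm s : Ordinal) := by
          rw [← (hsurj t).choose_spec, ← (hsurj s).choose_spec, h2]
        exact (Ordinal.ToType.mk (o := μ)).symm.injective (Subtype.ext h3)
      calc Cardinal.aleph.{u + 1} m = #μ.ToType := by rw [Cardinal.mk_toType, hμ, Cardinal.card_ord]
      _ ≤ #P := Cardinal.mk_le_of_injective hF
  refine ⟨P, R, hPsub, hRsub, hPR, hPcard, ?_⟩
  by_contra hcon
  push_neg at hcon
  have hcover : T ⊆ P ∪ R := by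
    intro x hx
    rcases lt_or_ge (Ordinal.typein r ⟨x, hx⟩) μ with h | h
    · exact Or.inl ⟨hx, h⟩
    · exact Or.inr ⟨hx, h⟩
  have h1 : #T ≤ #P + #R :=
    (Cardinal.mk_le_mk_of_subset hcover).trans (Cardinal.mk_union_le P R)
  have h2 : #P + #R < Cardinal.aleph.{u + 1} (m + 1) := by
    apply Cardinal.add_lt_of_lt (Cardinal.aleph0_le_aleph _)
    · rw [hPcard, Cardinal.aleph_lt_aleph]
      exact_mod_cast Nat.lt_succ_self m
    · exact hcon
  exact absurd (hT.trans h1) (not_le.mpr h2)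

lemma my_crux (m : ℕ) (hm : 1 ≤ m) (f : Sym2 Ordinal.{u} → ℕ) (G : Finset ℕ) (J : Sym2 ℕ → ℕ)
    (hJ : ∀ g : Sym2 (alephT m) → ℕ, RealizesId g G J)
    (T : Set Ordinal.{u}) (hT : Cardinal.aleph.{u + 1} (m + 1) ≤ #T) :
    ∃ (A : Finset Ordinal.{u}) (c : ℕ) (T' : Set Ordinal.{u}), ↑A ⊆ T ∧ T' ⊆ T ∧
      Cardinal.aleph.{u + 1} (m + 1) ≤ #T' ∧ (∀ a ∈ A, ∀ b ∈ T', a < b ∧ f s(a, b) = c) ∧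
      RealizesWithin f G J ↑A := by
  classical
  obtain ⟨P, R, hPsub, hRsub, hPR, hPcard, hRcard⟩ := my_split m T hT
  haveI hPinf : Infinite ↥P := by
    rw [Cardinal.infinite_iff, hPcard]
    exact Cardinal.aleph0_le_aleph _
  have key : ∀ b : ↥R, ∃ (A' : Finset ↥P) (v : ULift.{u + 1} ℕ),
      (∀ a ∈ A', f s((a : Ordinal), (b : Ordinal)) = v.down) ∧
      RealizesWithin f G J (Subtype.val '' (↑A' : Set ↥P)) := by
    intro b
    obtain ⟨v, hv⟩ := my_big_fiber
      (fun a : ↥P => (ULift.up (f s((a : Ordinal), (b : Ordinal))) : ULift.{u + 1} ℕ))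
      (my_isRegular_aleph_nat m hm) (le_of_eq hPcard.symm)
      (by rw [Cardinal.mk_uLift, Cardinal.mk_nat, Cardinal.lift_aleph0]
          exact my_aleph0_lt_aleph_nat m hm)
    set Y : Set ↥P :=
      {a : ↥P | (ULift.up (f s((a : Ordinal), (b : Ordinal))) : ULift.{u + 1} ℕ) = v} with hYdef
    have hYcard : #Y = Cardinal.aleph.{u + 1} m :=
      le_antisymm ((Cardinal.mk_set_le Y).trans (le_of_eq hPcard)) hv
    obtain ⟨e⟩ := my_equiv_alephT m hYcard
    obtain ⟨k₀, hk₀inj, -, hk₀⟩ := hJ (fun p => f (p.map (fun t => ((e t : ↥P) : Ordinal))))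
    refine ⟨G.image (fun x => (e (k₀ x) : ↥P)), v, ?_, ?_⟩
    · intro a ha
      rw [Finset.mem_image] at ha
      obtain ⟨x, hx, rfl⟩ := ha
      have hmem : ((e (k₀ x)) : ↥P) ∈ Y := (e (k₀ x)).2
      exact congrArg ULift.down hmem
    · refine ⟨fun x => ((e (k₀ x) : ↥P) : Ordinal), ?_, ?_, ?_⟩
      · intro x hx y hy hxy
        apply hk₀inj hx hy
        apply e.injective
        exact Subtype.ext (Subtype.ext hxy)
      · intro x hx
        exact ⟨(e (k₀ x) : ↥P), Finset.mem_coe.mpr (Finset.mem_image_of_mem _ hx), rfl⟩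
      · intro x y u w hx hy hu hw hxy huw hne
        apply hk₀ x y u w hx hy hu hw hxy huw
        simpa [Sym2.map_pair_eq] using hne
  set Φ : ↥R → Finset ↥P × ULift.{u + 1} ℕ :=
    fun b => ((key b).choose, (key b).choose_spec.choose) with hΦdef
  have hprod : #(Finset ↥P × ULift.{u + 1} ℕ) < Cardinal.aleph.{u + 1} (m + 1) := by
    rw [Cardinal.mk_prod, Cardinal.mk_finset_of_infinite, Cardinal.mk_uLift, Cardinal.mk_nat,
      Cardinal.lift_aleph0, Cardinal.lift_id, Cardinal.lift_aleph0, hPcard,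
      Cardinal.mul_eq_max (Cardinal.aleph0_le_aleph _) le_rfl,
      max_eq_left (Cardinal.aleph0_le_aleph _), Cardinal.aleph_lt_aleph]
    exact_mod_cast Nat.lt_succ_self m
  obtain ⟨⟨A', v⟩, hbig⟩ := my_big_fiber Φ (my_isRegular_aleph_nat (m + 1) (by omega))
    hRcard hprod
  set R₁ : Set ↥R := {b | Φ b = (A', v)} with hR₁def
  have hne : Nonempty ↥R₁ := by
    rw [← Cardinal.mk_ne_zero_iff]
    intro h0
    rw [h0] at hbig
    exact absurd hbig (not_le.mpr (Cardinal.aleph_pos _))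
  obtain ⟨⟨b₀, hb₀⟩⟩ := hne
  have hΦeq : ∀ b₁ : ↥R, b₁ ∈ R₁ → (key b₁).choose = A' ∧ (key b₁).choose_spec.choose = v := by
    intro b₁ hb₁
    have := hb₁
    rw [hR₁def, Set.mem_setOf_eq, hΦdef, Prod.mk.injEq] at this
    exact this
  refine ⟨A'.image Subtype.val, v.down, Subtype.val '' R₁, ?_, ?_, ?_, ?_, ?_⟩
  · intro x hx
    rw [Finset.coe_image] at hx
    obtain ⟨a, _, rfl⟩ := hx
    exact hPsub a.2
  · rintro x ⟨b₁, _, rfl⟩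
    exact hRsub b₁.2
  · rw [Cardinal.mk_image_eq Subtype.val_injective]
    exact hbig
  · intro a ha b hb
    rw [Finset.mem_image] at ha
    obtain ⟨a₀, ha₀, rfl⟩ := ha
    obtain ⟨b₁, hb₁, rfl⟩ := hb
    refine ⟨hPR _ a₀.2 _ b₁.2, ?_⟩
    obtain ⟨hA, hV⟩ := hΦeq b₁ hb₁
    have := (key b₁).choose_spec.choose_spec.1 a₀ (by rw [hA]; exact ha₀)
    rw [hV] at this
    exact this
  · obtain ⟨hA, _⟩ := hΦeq b₀ hb₀
    have hreal := (key b₀).choose_spec.choose_spec.2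
    rw [hA] at hreal
    have hsets : (↑(A'.image Subtype.val) : Set Ordinal)
        = Subtype.val '' (↑A' : Set ↥P) := by
      rw [Finset.coe_image]
    rw [hsets]
    exact hreal

lemma my_main (m : ℕ) (hm : 1 ≤ m) (f : Sym2 Ordinal.{u} → ℕ) :
    ∀ (n : ℕ) (Js : Fin n → (G : Finset ℕ) × (Sym2 ℕ → ℕ))
      (_ : ∀ i : Fin n, ∀ g : Sym2 (alephT m) → ℕ, RealizesId g (Js i).1 (Js i).2)
      (T : Set Ordinal.{u}) (_ : Cardinal.aleph.{u + 1} (m + 1) ≤ #T),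
    ∃ (A : Fin n → Finset Ordinal.{u}) (cs : Fin n → ℕ) (T' : Set Ordinal.{u}),
      (∀ i, ↑(A i) ⊆ T) ∧
      (∀ i j : Fin n, i < j → ∀ a ∈ A i, ∀ b ∈ A j, a < b) ∧
      (∀ i, RealizesWithin f (Js i).1 (Js i).2 ↑(A i)) ∧
      (∀ i j : Fin n, i < j → ∀ a ∈ A i, ∀ b ∈ A j, f s(a, b) = cs i) ∧
      T' ⊆ T ∧ Cardinal.aleph.{u + 1} (m + 1) ≤ #T' ∧
      (∀ i, ∀ a ∈ A i, ∀ b ∈ T', a < b ∧ f s(a, b) = cs i) := by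
  intro n
  induction n with
  | zero =>
    intro Js hJs T hT
    exact ⟨fun i => i.elim0, fun i => i.elim0, T, fun i => i.elim0,
      fun i => i.elim0, fun i => i.elim0, fun i => i.elim0,
      subset_rfl, hT, fun i => i.elim0⟩
  | succ n ih =>
    intro Js hJs T hT
    obtain ⟨A₀, c₀, T₁, hA₀T, hT₁T, hT₁card, hA₀T₁, hA₀real⟩ :=
      my_crux m hm f (Js 0).1 (Js 0).2 (hJs 0) T hT
    obtain ⟨A', cs', T'', hAT₁, hord, hreal, hcross, hT''T₁, hT''card, htail⟩ :=
      ih (fun i => Js i.succ) (fun i => hJs i.succ) T₁ hT₁card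
    refine ⟨Fin.cons A₀ A', Fin.cons c₀ cs', T'', ?_, ?_, ?_, ?_, hT''T₁.trans hT₁T, hT''card, ?_⟩
    · intro i
      refine Fin.cases ?_ ?_ i
      · rw [Fin.cons_zero]; exact hA₀T
      · intro i'
        rw [Fin.cons_succ]
        exact (hAT₁ i').trans hT₁T
    · intro i j hij a ha b hb
      refine Fin.cases ?_ ?_ i hij ha <;> clear hij ha
      · refine Fin.cases ?_ ?_ j hb <;> clear hb
        · intro hb hij ha
          exact absurd hij (lt_irrefl _)
        · intro j' hb hij ha
          rw [Fin.cons_zero] at ha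
          rw [Fin.cons_succ] at hb
          exact (hA₀T₁ a ha b (hAT₁ j' hb)).1
      · intro i'
        refine Fin.cases ?_ ?_ j hb <;> clear hb
        · intro hb hij ha
          exact absurd hij (by simp [Fin.lt_def])
        · intro j' hb hij ha
          rw [Fin.cons_succ] at ha hb
          exact hord i' j' (by rwa [Fin.succ_lt_succ_iff] at hij) a ha b hb
    · intro i
      refine Fin.cases ?_ ?_ i
      · rw [Fin.cons_zero]; exact hA₀real
      · intro i'
        rw [Fin.cons_succ]
        exact hreal i'
    · intro i j hij a ha b hb
      refine Fin.cases ?_ ?_ i hij ha <;> clear hij ha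
      · refine Fin.cases ?_ ?_ j hb <;> clear hb
        · intro hb hij ha
          exact absurd hij (lt_irrefl _)
        · intro j' hb hij ha
          rw [Fin.cons_zero] at ha
          rw [Fin.cons_succ] at hb
          rw [Fin.cons_zero]
          exact (hA₀T₁ a ha b (hAT₁ j' hb)).2
      · intro i'
        refine Fin.cases ?_ ?_ j hb <;> clear hb
        · intro hb hij ha
          exact absurd hij (by simp [Fin.lt_def])
        · intro j' hb hij ha
          rw [Fin.cons_succ] at ha hb
          rw [Fin.cons_succ]
          exact hcross i' j' (by rwa [Fin.succ_lt_succ_iff] at hij) a ha b hb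
    · intro i a ha b hb
      refine Fin.cases ?_ ?_ i ha <;> clear ha
      · intro ha
        rw [Fin.cons_zero] at ha
        rw [Fin.cons_zero]
        exact hA₀T₁ a ha b (hT''T₁ hb)
      · intro i' ha
        rw [Fin.cons_succ] at ha
        rw [Fin.cons_succ]
        exact htail i' a ha b hb


theorem end_homogeneous_configuration (m : ℕ) (hm : 1 ≤ m)
    (B : Set Ordinal) (hB : Cardinal.mk B = Cardinal.aleph (m + 1))
    (f : Sym2 Ordinal → ℕ)
    (n : ℕ) (Js : Fin n → (G : Finset ℕ) × (Sym2 ℕ → ℕ))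
    (hJs : ∀ i : Fin n, ∀ g : Sym2 (alephT m) → ℕ, RealizesId g (Js i).1 (Js i).2) :
    ∃ (A : Fin n → Finset Ordinal) (cs : Fin n → ℕ),
      (∀ i, ↑(A i) ⊆ B) ∧
      (∀ i j, i ≠ j → Disjoint (A i) (A j)) ∧
      (∀ i j : Fin n, i < j → ∀ a ∈ A i, ∀ b ∈ A j, a < b) ∧
      (∀ i, RealizesWithin f (Js i).1 (Js i).2 ↑(A i)) ∧
      (∀ i j : Fin n, i < j → ∀ a ∈ A i, ∀ b ∈ A j, f s(a, b) = cs i) := by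
  obtain ⟨A, cs, T', hsub, hord, hreal, hcross, -, -, -⟩ :=
    my_main m hm f n Js hJs B (le_of_eq hB.symm)
  refine ⟨A, cs, hsub, ?_, hord, hreal, hcross⟩
  intro i j hij
  rw [Finset.disjoint_left]
  intro x hxi hxj
  rcases lt_or_gt_of_ne hij with h | h
  · exact absurd (hord i j h x hxi x hxj) (lt_irrefl x)
  · exact absurd (hord j i h x hxj x hxi) (lt_irrefl x)
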